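/- arXiv:1706.08989 — 2 statements merged into one kernel-verified Lean document; each statement's English description precedes it below -/
import Mathlib

section
/- For every integer n ≥ 0, 3·JQ^{(3)}_n + jQ^{(3)}_n = 2^{n+1}·(1 + 2i + 4j + 8k). -/
open Quaternion

/-- Third order Jacobsthal numbers. -/
def J3 : ℕ → ℤ
  | 0 => 0
  | 1 => 1
  | 2 => 1
  | n + 3 => J3 (n + 2) + J3 (n + 1) + 2 * J3 n

/-- Third order Jacobsthal-Lucas numbers. -/
def jL3 : ℕ → ℤ
  | 0 => 2
  | 1 => 1
  | 2 => 5
  | n + 3 => jL3 (n + 2) + jL3 (n + 1) + 2 * jL3 n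

/-- The quaternion unit `i`. -/
noncomputable def qi : ℍ[ℝ] := ⟨0, 1, 0, 0⟩
/-- The quaternion unit `j`. -/
noncomputable def qj : ℍ[ℝ] := ⟨0, 0, 1, 0⟩
/-- The quaternion unit `k`. -/
noncomputable def qk : ℍ[ℝ] := ⟨0, 0, 0, 1⟩

/-- The `n`-th third order Jacobsthal quaternion. -/
noncomputable def JQ (n : ℕ) : ℍ[ℝ] :=
  (J3 n : ℝ) + (J3 (n + 1) : ℝ) * qi + (J3 (n + 2) : ℝ) * qj + (J3 (n + 3) : ℝ) * qk

/-- The `n`-th third order Jacobsthal-Lucas quaternion. -/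
noncomputable def jQ (n : ℕ) : ℍ[ℝ] :=
  (jL3 n : ℝ) + (jL3 (n + 1) : ℝ) * qi + (jL3 (n + 2) : ℝ) * qj + (jL3 (n + 3) : ℝ) * qk

lemma key : ∀ n : ℕ, 3 * J3 n + jL3 n = 2 ^ (n + 1)
  | 0 => by simp [J3, jL3]
  | 1 => by simp [J3, jL3]
  | 2 => by norm_num [J3, jL3]
  | n + 3 => by
    have h0 := key n
    have h1 := key (n + 1)
    have h2 := key (n + 2)
    simp only [J3, jL3]
    ring_nf
    ring_nf at h0 h1 h2
    nlinarith [h0, h1, h2]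

theorem third_order_jacobsthal_quaternion_sum_with_lucas (n : ℕ) :
    3 * JQ n + jQ n = (2 : ℍ[ℝ]) ^ (n + 1) * (1 + 2 * qi + 4 * qj + 8 * qk) := by
  have k0 := key n
  have k1 := key (n + 1)
  have k2 := key (n + 2)
  have k3 := key (n + 3)
  have e : ∀ m : ℕ, 3 * J3 m + jL3 m = 2 ^ (m + 1) → ((J3 m : ℝ) * 3 + jL3 m = 2 ^ (m + 1)) := by
    intro m hm
    have := congrArg (fun z : ℤ => (z : ℝ)) hm
    push_cast at this
    linarith
  have E0 := e n k0
  have E1 := e (n+1) k1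
  have E2 := e (n+2) k2
  have E3 := e (n+3) k3
  have hc : (2 : ℍ[ℝ]) ^ (n+1) = ((2 ^ (n+1) : ℝ) : ℍ[ℝ]) := by norm_cast
  have c3 : (3 : ℍ[ℝ]) = ((3 : ℝ) : ℍ[ℝ]) := by norm_cast
  have c2 : (2 : ℍ[ℝ]) = ((2 : ℝ) : ℍ[ℝ]) := by norm_cast
  have c4 : (4 : ℍ[ℝ]) = ((4 : ℝ) : ℍ[ℝ]) := by norm_cast
  have c8 : (8 : ℍ[ℝ]) = ((8 : ℝ) : ℍ[ℝ]) := by norm_cast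
  rw [hc, c3, c2, c4, c8]
  set r : ℝ := 2 ^ (n + 1) with hr
  have p1 : (2 : ℝ) ^ (n + 1 + 1) = 2 * r := by rw [hr]; ring
  have p2 : (2 : ℝ) ^ (n + 2 + 1) = 4 * r := by rw [hr]; ring
  have p3 : (2 : ℝ) ^ (n + 3 + 1) = 8 * r := by rw [hr]; ring
  rw [p1] at E1
  rw [p2] at E2
  rw [p3] at E3
  simp only [JQ, jQ]
  ext <;>
    simp [Quaternion.ext_iff, Quaternion.re_coe, Quaternion.imI_coe,
      Quaternion.imJ_coe, Quaternion.imK_coe, Quaternion.re_mul, Quaternion.imI_mul,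
      Quaternion.imJ_mul, Quaternion.imK_mul] <;>
    simp [qi, qj, qk] <;>
    linarith [E0, E1, E2, E3]
end

section
/- Let M be the 3×3 matrix [[1,1,2],[1,0,0],[0,1,0]] (with entries regarded as quaternions) and let R be the 3×3 quaternion matrix [[JQ^{(3)}_4, JQ^{(3)}_3 + 2JQ^{(3)}_2, 2JQ^{(3)}_3], [JQ^{(3)}_3, JQ^{(3)}_2 + 2JQ^{(3)}_1, 2JQ^{(3)}_2], [JQ^{(3)}_2, JQ^{(3)}_1 + 2JQ^{(3)}_0, 2JQ^{(3)}_1]]. Then for every integer n ≥ 0, R·M^n = [[JQ^{(3)}_{n+4}, JQ^{(3)}_{n+3} + 2JQ^{(3)}_{n+2}, 2JQ^{(3)}_{n+3}], [JQ^{(3)}_{n+3}, JQ^{(3)}_{n+2} + 2JQ^{(3)}_{n+1}, 2JQ^{(3)}_{n+2}], [JQ^{(3)}_{n+2}, JQ^{(3)}_{n+1} + 2JQ^{(3)}_n, 2JQ^{(3)}_{n+1}]]. -/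
open Quaternion

/-- The generating matrix `M` of the third order Jacobsthal sequence,
with entries regarded as quaternions. -/
noncomputable def Mmat : Matrix (Fin 3) (Fin 3) ℍ[ℝ] :=
  !![1, 1, 2; 1, 0, 0; 0, 1, 0]

/-- The third order Jacobsthal quaternion matrix `R`. -/
noncomputable def Rmat : Matrix (Fin 3) (Fin 3) ℍ[ℝ] :=
  !![JQ 4, JQ 3 + 2 * JQ 2, 2 * JQ 3;
     JQ 3, JQ 2 + 2 * JQ 1, 2 * JQ 2;
     JQ 2, JQ 1 + 2 * JQ 0, 2 * JQ 1]

lemma JQrec (n : ℕ) : JQ (n + 3) = JQ (n + 2) + JQ (n + 1) + 2 * JQ n := by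
  have h1 : n + 3 + 1 = (n + 1) + 3 := by ring
  have h2 : n + 3 + 2 = (n + 2) + 3 := by ring
  have h3 : n + 3 + 3 = (n + 3) + 3 := rfl
  have h4 : n + 2 + 1 = n + 3 := rfl
  have h5 : n + 2 + 2 = (n + 1) + 3 := by ring
  have h6 : n + 2 + 3 = (n + 2) + 3 := rfl
  have h7 : n + 1 + 1 = n + 2 := rfl
  have h8 : n + 1 + 2 = n + 3 := rfl
  rw [two_mul (JQ n)]
  simp only [JQ, h1, h2, h3, h4, h5, h6, h7, h8, J3]
  ext <;> simp only [Quaternion.re_mul, Quaternion.imI_mul, Quaternion.imJ_mul, Quaternion.imK_mul, Quaternion.re_add, Quaternion.imI_add, Quaternion.imJ_add, Quaternion.imK_add] <;> simp [qi, qj, qk] <;> ring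

set_option maxHeartbeats 1600000 in
theorem third_order_jacobsthal_quaternion_matrix_identity (n : ℕ) :
    Rmat * Mmat ^ n =
      !![JQ (n + 4), JQ (n + 3) + 2 * JQ (n + 2), 2 * JQ (n + 3);
         JQ (n + 3), JQ (n + 2) + 2 * JQ (n + 1), 2 * JQ (n + 2);
         JQ (n + 2), JQ (n + 1) + 2 * JQ n, 2 * JQ (n + 1)] := by
  induction n with
  | zero => simp [Rmat]
  | succ n ih =>
    rw [pow_succ, ← mul_assoc, ih, Mmat]
    have e1 : n + 1 + 4 = (n + 2) + 3 := by ring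
    have e2 : n + 1 + 3 = (n + 1) + 3 := rfl
    have e3 : n + 1 + 2 = n + 3 := rfl
    have e4 : n + 1 + 1 = n + 2 := rfl
    rw [Matrix.mul_fin_three]
    simp only [e1, e2, e3, e4, JQrec, mul_one, mul_zero, add_zero, zero_add, mul_comm]
    refine Matrix.ext fun i k => ?_
    fin_cases i <;> fin_cases k <;>
      simp only [Matrix.of_apply, Matrix.cons_val', Matrix.cons_val_zero, Matrix.cons_val_one,
        Matrix.head_cons, Matrix.head_fin_const, Matrix.empty_val', Matrix.cons_val_fin_one] <;>
      noncomm_ring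
end
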